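/- Let X be a site with a sheaf of rings, and suppose 0 → F' → F → F'' → 0 is a short exact sequence of sheaves of vector spaces over a field on X. If for every open U the map Γ(U; F) → Γ(U; F'') is surjective and F' and F satisfy a 'softness' condition stable under restriction to closed subobjects, and the analogous restricted sequences are exact with surjective global sections, then F'' satisfies the same softness condition. (Abstractly: in an abelian category of sheaves over a field, if F' and F are soft — meaning Γ(U;F) → Γ(U;F_Z) is surjective for all admissible closed Z and open U — and 0 → F' → F → F'' → 0 is exact, then F'' is soft.) -/

import Mathlib

open CategoryTheory Limits

/-- Abstract softness is inherited by quotients.  `Sh` is an abelian category (of sheaves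
of vector spaces over a field on a site), `Γ U` are the section functors indexed by the
opens `U : Op`, `ρ Z` are the exact "restriction to a closed subset" functors
`F ↦ F_Z` indexed by the closeds `Z : Cl`, with canonical morphisms `η Z : F ⟶ F_Z`.
A sheaf `F` is soft when every `Γ(U; F) → Γ(U; F_Z)` is surjective.  Assume:
softness is stable under the restrictions `ρ Z`; the functors `ρ Z` preserve the short
exactness of the given sequence `0 → F' → F → F'' → 0`; and (the key Proposition) for any
short exact sequence with soft first term the induced map on sections over any `U` is
surjective.  If `F'` and `F` are soft, then so is `F''`. -/
theorem stmt9 {Sh : Type*} [Category Sh] [Abelian Sh] {Op Cl : Type*}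
    (Γ : Op → Sh ⥤ AddCommGrpCat)
    (ρ : Cl → Sh ⥤ Sh) [∀ Z, (ρ Z).PreservesZeroMorphisms]
    (η : ∀ Z, 𝟭 Sh ⟶ ρ Z)
    (Soft : Sh → Prop)
    (hSoftDef : ∀ F, Soft F ↔
      ∀ (Z : Cl) (U : Op), Function.Surjective ((Γ U).map ((η Z).app F)))
    (hstable : ∀ (Z : Cl) (F : Sh), Soft F → Soft ((ρ Z).obj F))
    (S : ShortComplex Sh) (hS : S.ShortExact)
    (hρS : ∀ Z : Cl, (S.map (ρ Z)).ShortExact)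
    (hProp : ∀ S' : ShortComplex Sh, S'.ShortExact → Soft S'.X₁ →
      ∀ U : Op, Function.Surjective ((Γ U).map S'.g))
    (h1 : Soft S.X₁) (h2 : Soft S.X₂) :
    Soft S.X₃ := by
  rw [hSoftDef]
  intro Z U s
  -- lift s through the restricted sequence, whose first term is soft
  obtain ⟨t, ht⟩ := hProp (S.map (ρ Z)) (hρS Z) (hstable Z S.X₁ h1) U s
  -- lift t through softness of X₂
  obtain ⟨u, hu⟩ := (hSoftDef S.X₂).mp h2 Z U t
  refine ⟨(Γ U).map S.g u, ?_⟩
  have hnat : S.g ≫ (η Z).app S.X₃ = (η Z).app S.X₂ ≫ (ρ Z).map S.g :=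
    ((η Z).naturality S.g)
  calc ((Γ U).map ((η Z).app S.X₃)) ((Γ U).map S.g u)
      = ((Γ U).map (S.g ≫ (η Z).app S.X₃)) u := by
        rw [(Γ U).map_comp]; rfl
    _ = ((Γ U).map ((η Z).app S.X₂ ≫ (ρ Z).map S.g)) u := by rw [hnat]
    _ = ((Γ U).map ((ρ Z).map S.g)) (((Γ U).map ((η Z).app S.X₂)) u) := by
        rw [(Γ U).map_comp]; rfl
    _ = s := by rw [hu]; exact ht
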